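/- For all real x, y with |x| < 1, |y| < 1 and integers n ≥ m ≥ 0, one has ∏_{i=m}^n 1/(1−y·xⁱ) = ∑_{k≥0} y^k x^{mk} · (∏_{i=n−m+1}^{n−m+k} (1−xⁱ)) / (∏_{i=1}^k (1−xⁱ)). -/

import Mathlib

open Finset

noncomputable def qb (x : ℝ) (N : ℕ) : ℕ → ℝ
  | 0 => 1
  | k + 1 => qb x N k * (1 - x ^ (N + k + 1)) / (1 - x ^ (k + 1))

lemma qb_zero (x : ℝ) (N : ℕ) : qb x N 0 = 1 := rfl

lemma qb_succ (x : ℝ) (N k : ℕ) :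
    qb x N (k + 1) = qb x N k * (1 - x ^ (N + k + 1)) / (1 - x ^ (k + 1)) := rfl

lemma abs_pow_le (x : ℝ) (hx : |x| < 1) {i : ℕ} (hi : 1 ≤ i) : |x| ^ i ≤ |x| := by
  calc |x| ^ i ≤ |x| ^ 1 := pow_le_pow_of_le_one (abs_nonneg x) hx.le hi
  _ = |x| := pow_one _

lemma one_sub_pow_ne (x : ℝ) (hx : |x| < 1) {i : ℕ} (hi : 1 ≤ i) : 1 - x ^ i ≠ 0 := by
  have h1 : |x ^ i| < 1 := by
    rw [abs_pow]; exact lt_of_le_of_lt (abs_pow_le x hx hi) hx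
  have := abs_lt.mp h1
  intro h; nlinarith [this.1, this.2]

lemma qb_eq (x : ℝ) (N k : ℕ) :
    qb x N k = (∏ i ∈ Icc (N + 1) (N + k), (1 - x ^ i)) / ∏ i ∈ Icc 1 k, (1 - x ^ i) := by
  induction k with
  | zero => simp [qb]
  | succ k ih =>
    rw [qb_succ, ih, show N + (k + 1) = (N + k) + 1 by ring,
      prod_Icc_succ_top (by omega), prod_Icc_succ_top (by omega),
      mul_div_assoc, div_mul_div_comm, show N + k + 1 = N + (k + 1) by ring]

lemma qb_shift (x : ℝ) (hx : |x| < 1) (N k : ℕ) :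
    qb x (N + 1) k = qb x N k * (1 - x ^ (N + k + 1)) / (1 - x ^ (N + 1)) := by
  induction k with
  | zero =>
    rw [qb_zero, qb_zero, one_mul, div_self (one_sub_pow_ne x hx (by omega))]
  | succ k ih =>
    rw [qb_succ, ih, qb_succ]
    have h1 := one_sub_pow_ne x hx (i := k + 1) (by omega)
    have h2 := one_sub_pow_ne x hx (i := N + 1) (by omega)
    field_simp
    ring

lemma qb_pascal (x : ℝ) (hx : |x| < 1) (N k : ℕ) :
    qb x (N + 1) (k + 1) = qb x N (k + 1) + x ^ (N + 1) * qb x (N + 1) k := by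
  rw [qb_shift x hx N (k + 1), qb_shift x hx N k, qb_succ]
  have h1 := one_sub_pow_ne x hx (i := k + 1) (by omega)
  have h2 := one_sub_pow_ne x hx (i := N + 1) (by omega)
  field_simp
  ring

lemma qb_sum (x : ℝ) (hx : |x| < 1) (N k : ℕ) :
    qb x (N + 1) k = ∑ j ∈ range (k + 1), x ^ ((N + 1) * j) * qb x N (k - j) := by
  induction k with
  | zero => simp [qb]
  | succ k ih =>
    rw [qb_pascal x hx, ih, sum_range_succ' _ (k + 1), mul_sum]
    simp only [Nat.succ_sub_succ, mul_zero, pow_zero, one_mul, Nat.sub_zero]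
    rw [add_comm]
    congr 1
    apply sum_congr rfl
    intro j hj
    ring

lemma qb_bound (x : ℝ) (hx : |x| < 1) (N : ℕ) :
    ∃ C : ℝ, 0 < C ∧ ∀ k, |qb x N k| ≤ C := by
  set b := |x| with hb
  have hb0 : 0 ≤ b := abs_nonneg x
  have hb1 : b < 1 := hx
  set c : ℝ := 1 + (1 - b)⁻¹ with hc
  have hcpos : 0 < c := by
    have h1b : 0 < 1 - b := by linarith
    positivity
  have hfac : ∀ i : ℕ, 1 ≤ i → ∀ M : ℕ, |1 - x ^ (M + i)| / |1 - x ^ i| ≤ Real.exp (c * b ^ i) := by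
    intro i hi M
    have hbi : b ^ i ≤ b := abs_pow_le x hx hi
    have hbMi : b ^ (M + i) ≤ b ^ i := pow_le_pow_of_le_one hb0 hb1.le (by omega)
    have hbinn : (0:ℝ) ≤ b ^ i := by positivity
    have hpos : 0 < 1 - b ^ i := by linarith
    have h1 : |1 - x ^ (M + i)| ≤ 1 + b ^ i := by
      calc |1 - x ^ (M + i)| ≤ |(1:ℝ)| + |x ^ (M + i)| := abs_sub _ _
      _ = 1 + b ^ (M + i) := by rw [abs_one, abs_pow]
      _ ≤ 1 + b ^ i := by linarith
    have h2 : 1 - b ^ i ≤ |1 - x ^ i| := by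
      have := abs_sub_abs_le_abs_sub (1:ℝ) (x ^ i)
      rw [abs_one, abs_pow] at this
      linarith
    calc |1 - x ^ (M + i)| / |1 - x ^ i| ≤ (1 + b ^ i) / (1 - b ^ i) :=
          div_le_div₀ (by linarith) h1 hpos h2
    _ = (1 + b ^ i) * (1 - b ^ i)⁻¹ := by rw [div_eq_mul_inv]
    _ ≤ Real.exp (b ^ i) * Real.exp (b ^ i * (1 - b)⁻¹) := by
        apply mul_le_mul
        · linarith [Real.add_one_le_exp (b ^ i)]
        · have heq : (1 - b ^ i)⁻¹ = b ^ i / (1 - b ^ i) + 1 := by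
            field_simp
            ring
          rw [heq]
          calc b ^ i / (1 - b ^ i) + 1 ≤ Real.exp (b ^ i / (1 - b ^ i)) :=
                Real.add_one_le_exp _
          _ ≤ Real.exp (b ^ i * (1 - b)⁻¹) := by
              apply Real.exp_le_exp.mpr
              rw [div_eq_mul_inv]
              apply mul_le_mul_of_nonneg_left _ hbinn
              apply inv_anti₀ (by linarith) (by linarith)
        · positivity
        · positivity
    _ = Real.exp (c * b ^ i) := by
        rw [← Real.exp_add]; congr 1; rw [hc]; ring
  have hsum : ∀ k : ℕ, ∑ j ∈ range k, b ^ (j + 1) ≤ (1 - b)⁻¹ := by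
    intro k
    calc ∑ j ∈ range k, b ^ (j + 1) ≤ ∑ j ∈ range k, b ^ j := by
          apply sum_le_sum
          intro j _
          exact pow_le_pow_of_le_one hb0 hb1.le (by omega)
    _ ≤ ∑' j : ℕ, b ^ j := Summable.sum_le_tsum _ (fun j _ => by positivity)
          (summable_geometric_of_lt_one hb0 hb1)
    _ = (1 - b)⁻¹ := tsum_geometric_of_lt_one hb0 hb1
  refine ⟨Real.exp (c * (1 - b)⁻¹), Real.exp_pos _, fun k => ?_⟩
  have key : ∀ k : ℕ, |qb x N k| ≤ Real.exp (c * ∑ j ∈ range k, b ^ (j + 1)) := by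
    intro k
    induction k with
    | zero => simp [qb]
    | succ k ih =>
      rw [qb_succ, abs_div, abs_mul, sum_range_succ, mul_add, Real.exp_add]
      rw [mul_div_assoc]
      apply mul_le_mul ih (hfac (k + 1) (by omega) N) (by positivity) (by positivity)
  calc |qb x N k| ≤ Real.exp (c * ∑ j ∈ range k, b ^ (j + 1)) := key k
  _ ≤ Real.exp (c * (1 - b)⁻¹) := Real.exp_le_exp.mpr
        (mul_le_mul_of_nonneg_left (hsum k) hcpos.le)

lemma qb_summable_norm (x z : ℝ) (hx : |x| < 1) (hz : |z| < 1) (N : ℕ) :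
    Summable (fun k => ‖z ^ k * qb x N k‖) := by
  obtain ⟨C, hC, hb⟩ := qb_bound x hx N
  apply Summable.of_nonneg_of_le (fun k => norm_nonneg _) (fun k => ?_)
    ((summable_geometric_of_lt_one (abs_nonneg z) hz).mul_left C)
  rw [Real.norm_eq_abs, abs_mul, abs_pow]
  calc |z| ^ k * |qb x N k| ≤ |z| ^ k * C :=
        mul_le_mul_of_nonneg_left (hb k) (by positivity)
  _ = C * |z| ^ k := mul_comm _ _

lemma geom_summable_norm (w : ℝ) (hw : |w| < 1) :
    Summable (fun k : ℕ => ‖w ^ k‖) := by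
  simpa [Real.norm_eq_abs, abs_pow] using
    summable_geometric_of_lt_one (abs_nonneg w) hw

lemma key_identity (x : ℝ) (hx : |x| < 1) (N : ℕ) :
    ∀ z : ℝ, |z| < 1 → ∏ i ∈ range (N + 1), (1 - z * x ^ i)⁻¹ = ∑' k, z ^ k * qb x N k := by
  induction N with
  | zero =>
    intro z hz
    have hq : ∀ k, qb x 0 k = 1 := by
      intro k
      induction k with
      | zero => rfl
      | succ k ih =>
        rw [qb_succ, ih, one_mul, show 0 + k + 1 = k + 1 by ring,
          div_self (one_sub_pow_ne x hx (by omega))]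
    simp only [hq, mul_one]
    rw [tsum_geometric_of_norm_lt_one (by rwa [Real.norm_eq_abs])]
    simp
  | succ N ih =>
    intro z hz
    have hzx : |z * x ^ (N + 1)| < 1 := by
      rw [abs_mul, abs_pow]
      calc |z| * |x| ^ (N + 1) ≤ |z| * 1 :=
            mul_le_mul_of_nonneg_left (pow_le_one₀ (abs_nonneg x) hx.le) (abs_nonneg z)
      _ = |z| := mul_one _
      _ < 1 := hz
    rw [prod_range_succ, ih z hz]
    have hgeo : (1 - z * x ^ (N + 1))⁻¹ = ∑' j : ℕ, (z * x ^ (N + 1)) ^ j :=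
      (tsum_geometric_of_norm_lt_one (by rwa [Real.norm_eq_abs])).symm
    rw [hgeo, tsum_mul_tsum_eq_tsum_sum_range_of_summable_norm
      (qb_summable_norm x z hx hz N) (geom_summable_norm _ hzx)]
    apply tsum_congr
    intro n
    have step : ∀ k ∈ range (n + 1),
        z ^ k * qb x N k * (z * x ^ (N + 1)) ^ (n - k)
          = z ^ n * (x ^ ((N + 1) * (n - k)) * qb x N k) := by
      intro k hk
      have hkn : k ≤ n := Nat.lt_succ_iff.mp (mem_range.mp hk)
      have hkk : k + (n - k) = n := by omega
      rw [mul_pow, ← pow_mul]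
      have hz2 : z ^ k * z ^ (n - k) = z ^ n := by rw [← pow_add, hkk]
      calc z ^ k * qb x N k * (z ^ (n - k) * x ^ ((N + 1) * (n - k)))
          = (z ^ k * z ^ (n - k)) * (x ^ ((N + 1) * (n - k)) * qb x N k) := by ring
      _ = z ^ n * (x ^ ((N + 1) * (n - k)) * qb x N k) := by rw [hz2]
    rw [sum_congr rfl step, ← mul_sum, qb_sum x hx N n]
    congr 1
    rw [← sum_range_reflect (fun j => x ^ ((N + 1) * j) * qb x N (n - j)) (n + 1)]
    apply sum_congr rfl
    intro j hj
    have hjn : j ≤ n := Nat.lt_succ_iff.mp (mem_range.mp hj)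
    have h1 : n + 1 - 1 - j = n - j := by omega
    have h2 : n - (n - j) = j := by omega
    simp only [h1, h2]

theorem q_series_identity_general (x y : ℝ) (hx : |x| < 1) (hy : |y| < 1)
    (m n : ℕ) (hmn : m ≤ n) :
    ∏ i ∈ Finset.Icc m n, (1 - y * x ^ i)⁻¹
      = ∑' k : ℕ, y ^ k * x ^ (m * k)
          * (∏ i ∈ Finset.Icc (n - m + 1) (n - m + k), (1 - x ^ i))
          / ∏ i ∈ Finset.Icc 1 k, (1 - x ^ i) := by
  have hz : |y * x ^ m| < 1 := by
    rw [abs_mul, abs_pow]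
    calc |y| * |x| ^ m ≤ |y| * 1 :=
          mul_le_mul_of_nonneg_left (pow_le_one₀ (abs_nonneg x) hx.le) (abs_nonneg y)
    _ = |y| := mul_one _
    _ < 1 := hy
  have h := key_identity x hx (n - m) (y * x ^ m) hz
  have hL : ∏ i ∈ Finset.Icc m n, (1 - y * x ^ i)⁻¹
      = ∏ i ∈ range (n - m + 1), (1 - y * x ^ m * x ^ i)⁻¹ := by
    rw [← Finset.Ico_add_one_right_eq_Icc, prod_Ico_eq_prod_range]
    have : n + 1 - m = n - m + 1 := by omega
    rw [this]
    apply prod_congr rfl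
    intro i _
    rw [pow_add]
    ring_nf
  rw [hL, h]
  apply tsum_congr
  intro k
  rw [qb_eq, mul_pow, ← pow_mul, ← mul_div_assoc]
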